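/- Gaussian decoupling bound with logarithmic action dependence: let (Ω, ℙ) be a probability space, d ≥ 1, K ≥ 1, θ : Ω → ℝ^d a random vector, m ∈ ℝ^d, φ : Fin K → ℝ^d a feature map, a⋆ : ℝ^d → Fin K a measurable selector, and σ : Fin K → ℝ with σ(a) ≥ 0 such that for every a ∈ Fin K the real random variable ω ↦ ⟨θ(ω) − m, φ(a)⟩ has the Gaussian law with mean 0 and variance σ(a)² (no joint independence assumed). Then (E[⟨θ − m, φ(a⋆(θ))⟩])² ≤ 2·(1 + log K)·E[σ(a⋆(θ))²], where both expectations are with respect to ℙ. (This yields the bound ρ ≤ 2(1 + log K) on the lifted information ratio of Thompson sampling for linear losses with Gaussian noise and Gaussian prior.) -/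

import Mathlib

open MeasureTheory ProbabilityTheory
open scoped NNReal ENNReal

section Aux

lemma gauss_pdf_shift (v : ℝ≥0) (hv : v ≠ 0) (l x : ℝ) :
    Real.exp (l * x) * gaussianPDFReal 0 v x
      = Real.exp ((v:ℝ) * l ^ 2 / 2) * gaussianPDFReal ((v:ℝ) * l) v x := by
  have hv' : (0:ℝ) < (v:ℝ) := lt_of_le_of_ne v.coe_nonneg (by exact_mod_cast (Ne.symm hv))
  unfold gaussianPDFReal
  rw [mul_left_comm, mul_left_comm (Real.exp ((v:ℝ) * l ^ 2 / 2))]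
  congr 1
  rw [← Real.exp_add, ← Real.exp_add]
  congr 1
  field_simp
  ring

lemma gauss_mgf (v : ℝ≥0) (l : ℝ) :
    Integrable (fun x => Real.exp (l * x)) (gaussianReal 0 v) ∧
    ∫ x, Real.exp (l * x) ∂(gaussianReal 0 v) = Real.exp ((v:ℝ) * l ^ 2 / 2) := by
  by_cases hv : v = 0
  · subst hv
    rw [gaussianReal_zero_var]
    constructor
    · exact (integrable_const _).congr (ae_eq_dirac (fun x => Real.exp (l*x))).symm
    · simp
  · rw [gaussianReal_of_var_ne_zero _ hv]
    have hd : gaussianPDF 0 v = fun x => ((Real.toNNReal (gaussianPDFReal 0 v x) : ℝ≥0) : ℝ≥0∞) := by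
      ext x; rw [gaussianPDF]; rfl
    have hmeas : Measurable fun x => Real.toNNReal (gaussianPDFReal 0 v x) :=
      (measurable_gaussianPDFReal 0 v).real_toNNReal
    have hsmul : ∀ x : ℝ, (Real.toNNReal (gaussianPDFReal 0 v x) : ℝ) • Real.exp (l * x)
        = Real.exp ((v:ℝ) * l ^ 2 / 2) * gaussianPDFReal ((v:ℝ) * l) v x := by
      intro x
      rw [smul_eq_mul, Real.coe_toNNReal _ (gaussianPDFReal_nonneg 0 v x), mul_comm,
        gauss_pdf_shift v hv]
    have hint : Integrable (fun x => (Real.toNNReal (gaussianPDFReal 0 v x) : ℝ) • Real.exp (l * x)) := by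
      simp_rw [hsmul]
      exact (integrable_gaussianPDFReal _ _).const_mul _
    constructor
    · rw [hd, integrable_withDensity_iff_integrable_coe_smul hmeas]
      exact hint
    · rw [hd, integral_withDensity_eq_integral_smul hmeas]
      simp_rw [NNReal.smul_def]
      rw [show (fun x => (Real.toNNReal (gaussianPDFReal 0 v x) : ℝ) • Real.exp (l * x)) = (fun x => Real.exp ((v:ℝ) * l ^ 2 / 2) * gaussianPDFReal ((v:ℝ) * l) v x) from funext hsmul]
      rw [integral_const_mul, integral_gaussianPDFReal_eq_one _ hv, mul_one]

lemma gauss_integrable_id (v : ℝ≥0) : Integrable (fun x : ℝ => x) (gaussianReal 0 v) := by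
  have h1 := (gauss_mgf v 1).1
  have h2 := (gauss_mgf v (-1)).1
  refine (h1.add h2).mono measurable_id.aestronglyMeasurable (ae_of_all _ fun x => ?_)
  simp only [Pi.add_apply, Real.norm_eq_abs, one_mul, neg_one_mul]
  have e1 := Real.add_one_le_exp x
  have e2 := Real.add_one_le_exp (-x)
  have p1 := Real.exp_pos x
  have p2 := Real.exp_pos (-x)
  rw [abs_of_pos (show (0:ℝ) < Real.exp x + Real.exp (-x) by positivity)]
  exact abs_le.mpr ⟨by linarith, by linarith⟩

set_option maxHeartbeats 1000000 in
/-- The key abstract decoupling lemma. -/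
lemma gauss_decoupling_aux
    {Ω : Type*} [MeasurableSpace Ω] (P : Measure Ω) [IsProbabilityMeasure P]
    {K : ℕ} (hK : 1 ≤ K)
    (X : Fin K → Ω → ℝ) (hX : ∀ a, Measurable (X a))
    (A : Ω → Fin K) (hA : Measurable A)
    (σ : Fin K → ℝ) (hσ : ∀ a, 0 ≤ σ a)
    (hlaw : ∀ a, Measure.map (X a) P = gaussianReal 0 (⟨σ a ^ 2, sq_nonneg (σ a)⟩ : NNReal)) :
    ∫ ω, X (A ω) ω ∂P
      ≤ Real.sqrt ((2 * (1 + Real.log K)) * ∫ ω, σ (A ω) ^ 2 ∂P) := by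
  set v : Fin K → ℝ≥0 := fun a => (⟨σ a ^ 2, sq_nonneg (σ a)⟩ : ℝ≥0) with hv
  have hXint : ∀ a, Integrable (X a) P := by
    intro a
    have h := gauss_integrable_id (v a)
    rw [← hlaw a] at h
    exact (integrable_map_measure aestronglyMeasurable_id (hX a).aemeasurable).mp h
  set E : Fin K → Set Ω := fun a => A ⁻¹' {a} with hE
  have mE : ∀ a, MeasurableSet (E a) := fun a => hA (measurableSet_singleton a)
  set p : Fin K → ℝ := fun a => (P (E a)).toReal with hpdef
  have hp0 : ∀ a, 0 ≤ p a := fun a => ENNReal.toReal_nonneg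
  have hp1 : ∀ a, p a ≤ 1 := by
    intro a
    refine ENNReal.toReal_le_of_le_ofReal zero_le_one ?_
    simpa using prob_le_one
  -- decomposition
  have hdecomp : ∀ (f : Fin K → Ω → ℝ), (∀ a, Integrable (f a) P) →
      ∫ ω, f (A ω) ω ∂P = ∑ a, ∫ ω in E a, f a ω ∂P := by
    intro f hf
    have hpt : ∀ ω, f (A ω) ω = ∑ a, Set.indicator (E a) (f a) ω := by
      intro ω
      rw [Finset.sum_eq_single (A ω)]
      · rw [Set.indicator_of_mem (by simp [hE]) (f (A ω))]
      · intro b _ hb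
        exact Set.indicator_of_notMem (by simp [hE, Ne.symm hb]) _
      · simp
    calc ∫ ω, f (A ω) ω ∂P = ∫ ω, ∑ a, Set.indicator (E a) (f a) ω ∂P := by
          exact integral_congr_ae (ae_of_all _ hpt)
      _ = ∑ a, ∫ ω, Set.indicator (E a) (f a) ω ∂P :=
          integral_finset_sum _ (fun a _ => (hf a).indicator (mE a))
      _ = ∑ a, ∫ ω in E a, f a ω ∂P := by
          exact Finset.sum_congr rfl (fun a _ => integral_indicator (mE a))
  have hsum1 : ∑ a, p a = 1 := by
    have h := hdecomp (fun _ _ => (1:ℝ)) (fun _ => integrable_const _)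
    simp only [integral_const, measure_univ, ENNReal.toReal_one, smul_eq_mul, mul_one,
      one_smul, Measure.restrict_apply_univ, measureReal_restrict_apply_univ, probReal_univ] at h
    exact h.symm
  have hSrw : ∫ ω, σ (A ω) ^ 2 ∂P = ∑ a, p a * σ a ^ 2 := by
    rw [hdecomp (fun a _ => σ a ^ 2) (fun _ => integrable_const _)]
    refine Finset.sum_congr rfl (fun a _ => ?_)
    rw [setIntegral_const, smul_eq_mul]; rfl
  -- constants
  set β : ℝ := Real.exp (-(3/2)) with hβ
  have hβpos : 0 < β := Real.exp_pos _
  have hβ4 : β ≤ 1/4 := by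
    have h1 : (2.7182818283:ℝ) < Real.exp 1 := Real.exp_one_gt_d9
    have h2 : (1.5:ℝ) ≤ Real.exp (1/2) := by
      have := Real.add_one_le_exp (1/2:ℝ); linarith
    have h4 : (4:ℝ) ≤ Real.exp (3/2) := by
      rw [show (3/2:ℝ) = 1 + 1/2 by norm_num, Real.exp_add]
      nlinarith [Real.exp_pos (1/2:ℝ)]
    rw [hβ, Real.exp_neg]
    rw [show (1/4:ℝ) = 4⁻¹ by norm_num]
    exact inv_anti₀ (by norm_num) h4
  set u : Fin K → ℝ := fun a => Real.sqrt (1 + 2 * Real.log (p a)⁻¹) with hu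
  have hlogp : ∀ a, 0 ≤ Real.log (p a)⁻¹ := by
    intro a
    rcases eq_or_lt_of_le (hp0 a) with h | h
    · simp [← h]
    · exact Real.log_nonneg ((one_le_inv₀ h).mpr (hp1 a))
  have hu1 : ∀ a, 1 ≤ u a := by
    intro a
    have h : (1:ℝ) ≤ 1 + 2 * Real.log (p a)⁻¹ := by linarith [hlogp a]
    calc (1:ℝ) = Real.sqrt 1 := Real.sqrt_one.symm
      _ ≤ u a := Real.sqrt_le_sqrt h
  have hu0 : ∀ a, 0 < u a := fun a => lt_of_lt_of_le zero_lt_one (hu1 a)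
  have husq : ∀ a, u a ^ 2 = 1 + 2 * Real.log (p a)⁻¹ := fun a =>
    Real.sq_sqrt (by linarith [hlogp a])
  set w : Fin K → ℝ := fun a => u a + β / u a with hw
  have hw0 : ∀ a, 0 ≤ w a := by
    intro a
    have := hu0 a
    have : 0 < β / u a := by positivity
    have := hu0 a
    rw [hw]; dsimp only; positivity
  -- per action bound
  have hkey : ∀ a, ∫ ω in E a, X a ω ∂P ≤ p a * (σ a * w a) := by
    intro a
    by_cases hpa : p a = 0
    · have hP0 : P (E a) = 0 := by
        have hne : P (E a) ≠ ⊤ := measure_ne_top _ _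
        exact (ENNReal.toReal_eq_zero_iff _).mp hpa |>.resolve_right hne
      rw [Measure.restrict_eq_zero.mpr hP0, integral_zero_measure, hpa]
      simp
    by_cases hsa : σ a = 0
    · have hv0 : v a = 0 := by
        rw [hv]; ext; simp [hsa]; rfl
      have hmap : Measure.map (X a) P = Measure.dirac 0 := by
        rw [hlaw a]
        rw [show (⟨σ a ^ 2, sq_nonneg (σ a)⟩ : ℝ≥0) = v a from rfl, hv0, gaussianReal_zero_var]
      have hae : X a =ᵐ[P] (fun _ => (0:ℝ)) := by
        rw [Filter.EventuallyEq, ae_iff]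
        have hms : MeasurableSet ({(0:ℝ)}ᶜ) := (measurableSet_singleton 0).compl
        have : P (X a ⁻¹' {(0:ℝ)}ᶜ) = 0 := by
          rw [← Measure.map_apply (hX a) hms, hmap, Measure.dirac_apply' _ hms]
          simp
        convert this using 2
        ext; simp
      have : ∫ ω in E a, X a ω ∂P = 0 := by
        rw [setIntegral_congr_ae (mE a) (hae.mono (fun ω h _ => h))]
        simp
      rw [this, hsa]
      simp
    · have hp : 0 < p a := lt_of_le_of_ne (hp0 a) (Ne.symm hpa)
      have hs : 0 < σ a := lt_of_le_of_ne (hσ a) (Ne.symm hsa)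
      set τ : ℝ := σ a * u a with hτ
      set l : ℝ := u a / σ a with hl
      have hl0 : 0 < l := div_pos (hu0 a) hs
      set c : ℝ := Real.exp (-(l*τ) - 1) / l with hc
      have hc0 : 0 < c := by positivity
      have hmgf := gauss_mgf (v a) l
      have hexpmeas : Measurable (fun x : ℝ => Real.exp (l * x)) :=
        Real.measurable_exp.comp (measurable_const.mul measurable_id)
      have hexpint : Integrable (fun ω => Real.exp (l * X a ω)) P := by
        have h := hmgf.1
        rw [← hlaw a] at h
        exact (integrable_map_measure hexpmeas.aestronglyMeasurable (hX a).aemeasurable).mp h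
      have hexpval : ∫ ω, Real.exp (l * X a ω) ∂P = Real.exp (σ a ^ 2 * l ^ 2 / 2) := by
        have h := hmgf.2
        rw [← hlaw a, integral_map (hX a).aemeasurable hexpmeas.aestronglyMeasurable] at h
        exact h
      have hptwise : ∀ x : ℝ, x ≤ τ + c * Real.exp (l * x) := by
        intro x
        have hkey2 : l * (x - τ) ≤ Real.exp (l * (x - τ) - 1) := by
          have := Real.add_one_le_exp (l * (x - τ) - 1); linarith
        have hexprw : c * Real.exp (l * x) = Real.exp (l * (x - τ) - 1) / l := by
          rw [hc, div_mul_eq_mul_div, ← Real.exp_add]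
          congr 2
          ring
        rcases le_or_gt x τ with h | h
        · have : 0 < c * Real.exp (l * x) := by positivity
          linarith
        · rw [hexprw, ← sub_le_iff_le_add', le_div_iff₀ hl0]
          nlinarith [hkey2]
      have hint2 : Integrable (fun ω => τ + c * Real.exp (l * X a ω)) P :=
        (integrable_const τ).add (hexpint.const_mul c)
      have step1 : ∫ ω in E a, X a ω ∂P ≤ ∫ ω in E a, (τ + c * Real.exp (l * X a ω)) ∂P :=
        setIntegral_mono ((hXint a).integrableOn) (hint2.integrableOn)
          (fun ω => hptwise (X a ω))
      have step2 : ∫ ω in E a, (τ + c * Real.exp (l * X a ω)) ∂P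
          = τ * p a + c * ∫ ω in E a, Real.exp (l * X a ω) ∂P := by
        rw [integral_add (show Integrable (fun _ => τ) (P.restrict (E a)) from integrableOn_const (measure_ne_top _ _))
          ((hexpint.const_mul c).integrableOn), setIntegral_const, integral_const_mul,
          smul_eq_mul, mul_comm]
        rfl
      have step3 : ∫ ω in E a, Real.exp (l * X a ω) ∂P ≤ ∫ ω, Real.exp (l * X a ω) ∂P :=
        setIntegral_le_integral hexpint (ae_of_all _ (fun ω => (Real.exp_pos _).le))
      have hfinal : τ * p a + c * Real.exp (σ a ^ 2 * l ^ 2 / 2) = p a * (σ a * w a) := by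
        have hσl : σ a ^ 2 * l ^ 2 / 2 = u a ^ 2 / 2 := by
          rw [hl]; field_simp
        have hlτ : l * τ = u a ^ 2 := by
          rw [hl, hτ]; field_simp
        have hcval : c * Real.exp (σ a ^ 2 * l ^ 2 / 2) = p a * (σ a * (β / u a)) := by
          rw [hσl, hc, hlτ, div_mul_eq_mul_div, ← Real.exp_add, hl]
          rw [show -(u a ^ 2) - 1 + u a ^ 2 / 2 = -(3/2) + (-(u a ^ 2 / 2) + 1/2) by ring]
          rw [husq a, show -((1 + 2 * Real.log (p a)⁻¹) / 2) + 1/2 = -Real.log (p a)⁻¹ by ring]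
          rw [Real.exp_add, Real.log_inv, neg_neg, Real.exp_log hp, ← hβ]
          field_simp
        rw [hcval, hτ, hw]
        ring
      calc ∫ ω in E a, X a ω ∂P ≤ τ * p a + c * ∫ ω in E a, Real.exp (l * X a ω) ∂P := by
            rw [← step2]; exact step1
        _ ≤ τ * p a + c * ∫ ω, Real.exp (l * X a ω) ∂P := by
            have := mul_le_mul_of_nonneg_left step3 hc0.le
            linarith
        _ = τ * p a + c * Real.exp (σ a ^ 2 * l ^ 2 / 2) := by rw [hexpval]
        _ = p a * (σ a * w a) := hfinal
  -- Cauchy-Schwarz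
  have hCS : ∑ a, p a * (σ a * w a)
      ≤ Real.sqrt (∑ a, p a * σ a ^ 2) * Real.sqrt (∑ a, p a * w a ^ 2) := by
    have hrw : ∀ a : Fin K, p a * (σ a * w a)
        = (Real.sqrt (p a) * σ a) * (Real.sqrt (p a) * w a) := by
      intro a
      rw [show (Real.sqrt (p a) * σ a) * (Real.sqrt (p a) * w a)
          = (Real.sqrt (p a) * Real.sqrt (p a)) * (σ a * w a) by ring,
        Real.mul_self_sqrt (hp0 a)]
    have hsq : ∀ a : Fin K, (Real.sqrt (p a) * σ a) ^ 2 = p a * σ a ^ 2 := by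
      intro a; rw [mul_pow, Real.sq_sqrt (hp0 a)]
    have hsq2 : ∀ a : Fin K, (Real.sqrt (p a) * w a) ^ 2 = p a * w a ^ 2 := by
      intro a; rw [mul_pow, Real.sq_sqrt (hp0 a)]
    have hcs := Finset.sum_mul_sq_le_sq_mul_sq Finset.univ
      (fun a => Real.sqrt (p a) * σ a) (fun a => Real.sqrt (p a) * w a)
    simp_rw [hrw]
    have hnn : 0 ≤ ∑ a, (Real.sqrt (p a) * σ a) * (Real.sqrt (p a) * w a) := by
      refine Finset.sum_nonneg (fun a _ => ?_)
      have := Real.sqrt_nonneg (p a)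
      exact mul_nonneg (mul_nonneg this (hσ a)) (mul_nonneg this (hw0 a))
    calc ∑ a, (Real.sqrt (p a) * σ a) * (Real.sqrt (p a) * w a)
        = Real.sqrt ((∑ a, (Real.sqrt (p a) * σ a) * (Real.sqrt (p a) * w a)) ^ 2) :=
          (Real.sqrt_sq hnn).symm
      _ ≤ Real.sqrt ((∑ a, (Real.sqrt (p a) * σ a) ^ 2) * (∑ a, (Real.sqrt (p a) * w a) ^ 2)) :=
          Real.sqrt_le_sqrt hcs
      _ = Real.sqrt (∑ a, p a * σ a ^ 2) * Real.sqrt (∑ a, p a * w a ^ 2) := by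
          simp_rw [hsq, hsq2]
          exact Real.sqrt_mul (Finset.sum_nonneg (fun a _ =>
            mul_nonneg (hp0 a) (sq_nonneg _))) _
  -- entropy bound
  have hent : ∑ a, p a * Real.log (p a)⁻¹ ≤ Real.log K := by
    have hKpos : (0:ℝ) < K := by exact_mod_cast Nat.lt_of_lt_of_le Nat.zero_lt_one hK
    have hterm : ∀ a : Fin K, p a * Real.log (p a)⁻¹
        ≤ p a * Real.log K + (1/K - p a) := by
      intro a
      rcases eq_or_lt_of_le (hp0 a) with h | h
      · rw [← h]; simp
      · have h2 := Real.log_le_sub_one_of_pos (show (0:ℝ) < ((K:ℝ) * p a)⁻¹ by positivity)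
        rw [Real.log_inv, Real.log_mul hKpos.ne' h.ne'] at h2
        have h3 := mul_le_mul_of_nonneg_left h2 h.le
        have h4 : p a * ((K:ℝ) * p a)⁻¹ = 1/K := by field_simp
        have e1 : p a * (-(Real.log K + Real.log (p a)))
            = -(p a * Real.log K) - p a * Real.log (p a) := by ring
        have e2 : p a * (((K:ℝ) * p a)⁻¹ - 1) = 1/K - p a := by
          rw [mul_sub, h4, mul_one]
        rw [e1, e2] at h3
        have e3 : p a * Real.log (p a)⁻¹ = -(p a * Real.log (p a)) := by
          rw [Real.log_inv]; ring
        rw [e3]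
        linarith
    calc ∑ a, p a * Real.log (p a)⁻¹ ≤ ∑ a, (p a * Real.log K + (1/K - p a)) :=
          Finset.sum_le_sum (fun a _ => hterm a)
      _ = (∑ a, p a) * Real.log K + ((K:ℝ) * (1/K) - ∑ a, p a) := by
          rw [Finset.sum_add_distrib, Finset.sum_sub_distrib, ← Finset.sum_mul,
            Finset.sum_const, Finset.card_univ, Fintype.card_fin, nsmul_eq_mul]
      _ = Real.log K := by
          rw [hsum1, mul_one_div, div_self hKpos.ne']
          ring
  -- bound on ∑ p w²
  have hw2 : ∑ a, p a * w a ^ 2 ≤ 2 * (1 + Real.log K) := by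
    have hterm : ∀ a : Fin K, p a * w a ^ 2
        ≤ p a * (1 + 2 * Real.log (p a)⁻¹) + p a * (2*β + β^2) := by
      intro a
      have hua := hu0 a
      have h1 : w a ^ 2 = u a ^ 2 + 2 * β + β^2 / u a ^ 2 := by
        rw [hw]; field_simp; ring
      have h2 : β^2 / u a ^ 2 ≤ β^2 := by
        apply div_le_self (sq_nonneg β)
        nlinarith [hu1 a]
      have h3 : w a ^ 2 ≤ u a ^ 2 + 2*β + β^2 := by rw [h1]; linarith
      have h4 := mul_le_mul_of_nonneg_left h3 (hp0 a)
      rw [husq a] at h4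
      linarith
    calc ∑ a, p a * w a ^ 2
        ≤ ∑ a, (p a * (1 + 2 * Real.log (p a)⁻¹) + p a * (2*β + β^2)) :=
          Finset.sum_le_sum (fun a _ => hterm a)
      _ = (∑ a, p a) + 2 * (∑ a, p a * Real.log (p a)⁻¹) + (2*β+β^2) * (∑ a, p a) := by
          simp_rw [show ∀ a : Fin K, p a * (1 + 2 * Real.log (p a)⁻¹) + p a * (2*β+β^2)
              = p a + 2 * (p a * Real.log (p a)⁻¹) + (2*β+β^2) * p a from fun a => by ring]
          rw [Finset.sum_add_distrib, Finset.sum_add_distrib, ← Finset.mul_sum, ← Finset.mul_sum]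
      _ ≤ 1 + 2 * Real.log K + 1 := by
          rw [hsum1]
          have : 2*β + β^2 ≤ 1 := by nlinarith [hβpos.le, hβ4]
          have := hent
          nlinarith
      _ = 2 * (1 + Real.log K) := by ring
  -- conclude
  have hS0 : 0 ≤ ∑ a, p a * σ a ^ 2 :=
    Finset.sum_nonneg (fun a _ => mul_nonneg (hp0 a) (sq_nonneg _))
  calc ∫ ω, X (A ω) ω ∂P = ∑ a, ∫ ω in E a, X a ω ∂P := hdecomp X hXint
    _ ≤ ∑ a, p a * (σ a * w a) := Finset.sum_le_sum (fun a _ => hkey a)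
    _ ≤ Real.sqrt (∑ a, p a * σ a ^ 2) * Real.sqrt (∑ a, p a * w a ^ 2) := hCS
    _ ≤ Real.sqrt (∑ a, p a * σ a ^ 2) * Real.sqrt (2 * (1 + Real.log K)) :=
        mul_le_mul_of_nonneg_left (Real.sqrt_le_sqrt hw2) (Real.sqrt_nonneg _)
    _ = Real.sqrt ((2 * (1 + Real.log K)) * ∫ ω, σ (A ω) ^ 2 ∂P) := by
        rw [← Real.sqrt_mul hS0, hSrw, mul_comm]

end Aux


/-- Gaussian decoupling bound with logarithmic action dependence: if for each
action `a` the gap `⟨θ − m, φ(a)⟩` is a centered Gaussian with variance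
`σ(a)²` (no joint independence assumed), then
`(E[⟨θ − m, φ(a⋆(θ))⟩])² ≤ 2(1 + log K) · E[σ(a⋆(θ))²]`.  This yields the
bound `ρ ≤ 2(1 + log K)` on the lifted information ratio of Thompson sampling
for linear losses with Gaussian noise and Gaussian prior. -/
theorem gaussian_decoupling_log_actions
    {Ω : Type*} [MeasurableSpace Ω] (P : Measure Ω) [IsProbabilityMeasure P]
    {d K : ℕ} (hd : 1 ≤ d) (hK : 1 ≤ K)
    (θ : Ω → EuclideanSpace ℝ (Fin d)) (hθ : Measurable θ)
    (m : EuclideanSpace ℝ (Fin d)) (φ : Fin K → EuclideanSpace ℝ (Fin d))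
    (astar : EuclideanSpace ℝ (Fin d) → Fin K) (hastar : Measurable astar)
    (σ : Fin K → ℝ) (hσ : ∀ a, 0 ≤ σ a)
    (hlaw : ∀ a : Fin K,
      Measure.map (fun ω => (inner ℝ (θ ω - m) (φ a) : ℝ)) P
        = gaussianReal 0 (⟨σ a ^ 2, sq_nonneg (σ a)⟩ : NNReal)) :
    (∫ ω, (inner ℝ (θ ω - m) (φ (astar (θ ω))) : ℝ) ∂P) ^ 2
      ≤ 2 * (1 + Real.log K) * ∫ ω, σ (astar (θ ω)) ^ 2 ∂P := by
  have hXm : ∀ a : Fin K, Measurable (fun ω => (inner ℝ (θ ω - m) (φ a) : ℝ)) :=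
    fun a => (hθ.sub measurable_const).inner measurable_const
  have hAm : Measurable (fun ω => astar (θ ω)) := hastar.comp hθ
  have h1' : ∫ ω, (inner ℝ (θ ω - m) (φ (astar (θ ω))) : ℝ) ∂P
      ≤ Real.sqrt (2 * (1 + Real.log K) * ∫ ω, σ (astar (θ ω)) ^ 2 ∂P) :=
    gauss_decoupling_aux P hK _ hXm _ hAm σ hσ hlaw
  have hlawneg : ∀ a : Fin K,
      Measure.map (fun ω => -(inner ℝ (θ ω - m) (φ a) : ℝ)) P
        = gaussianReal 0 (⟨σ a ^ 2, sq_nonneg (σ a)⟩ : NNReal) := by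
    intro a
    have hcomp : (fun ω => -(inner ℝ (θ ω - m) (φ a) : ℝ))
        = ((fun x : ℝ => (-1 : ℝ) * x) ∘ (fun ω => (inner ℝ (θ ω - m) (φ a) : ℝ))) := by
      funext ω; simp
    rw [hcomp, ← Measure.map_map (show Measurable (fun x : ℝ => (-1:ℝ) * x) from measurable_id.const_mul (-1)) (hXm a), hlaw a]
    have hmap := gaussianReal_map_const_mul
      (μ := 0) (v := (⟨σ a ^ 2, sq_nonneg (σ a)⟩ : NNReal)) (-1 : ℝ)
    have hv1 : NNReal.mk ((-1:ℝ)^2) (sq_nonneg _) = 1 := by ext; norm_num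
    rw [show ((fun x : ℝ => (-1 : ℝ) * x)) = ((-1 : ℝ) * ·) from rfl, hmap, hv1,
      show (-1 : ℝ) * 0 = 0 by ring]
    exact congrArg (gaussianReal 0) (one_mul _)
  have h2' : ∫ ω, -(inner ℝ (θ ω - m) (φ (astar (θ ω))) : ℝ) ∂P
      ≤ Real.sqrt (2 * (1 + Real.log K) * ∫ ω, σ (astar (θ ω)) ^ 2 ∂P) :=
    gauss_decoupling_aux P hK _ (fun a => (hXm a).neg) _ hAm σ hσ hlawneg
  rw [integral_neg] at h2'
  have hR0 : 0 ≤ 2 * (1 + Real.log K) * ∫ ω, σ (astar (θ ω)) ^ 2 ∂P := by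
    have hlK : 0 ≤ Real.log K := Real.log_nonneg (by exact_mod_cast hK)
    have : 0 ≤ ∫ ω, σ (astar (θ ω)) ^ 2 ∂P := integral_nonneg (fun ω => sq_nonneg _)
    positivity
  have habs : |∫ ω, (inner ℝ (θ ω - m) (φ (astar (θ ω))) : ℝ) ∂P|
      ≤ Real.sqrt (2 * (1 + Real.log K) * ∫ ω, σ (astar (θ ω)) ^ 2 ∂P) :=
    abs_le.mpr ⟨by linarith, h1'⟩
  calc (∫ ω, (inner ℝ (θ ω - m) (φ (astar (θ ω))) : ℝ) ∂P) ^ 2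
      = |∫ ω, (inner ℝ (θ ω - m) (φ (astar (θ ω))) : ℝ) ∂P| ^ 2 := (sq_abs _).symm
    _ ≤ Real.sqrt (2 * (1 + Real.log K) * ∫ ω, σ (astar (θ ω)) ^ 2 ∂P) ^ 2 :=
        pow_le_pow_left₀ (abs_nonneg _) habs 2
    _ = 2 * (1 + Real.log K) * ∫ ω, σ (astar (θ ω)) ^ 2 ∂P := Real.sq_sqrt hR0
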